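/- Let n ∈ ℕ, E = EuclideanSpace ℝ (Fin n) with Lebesgue measure, t₀ ∈ ℝ, ε > 0, and let p, q, p', q' : ℝ → E → ℝ. Assume: (i) p t a > 0 and q t a > 0 for all t ∈ (t₀ − ε, t₀ + ε) and all a ∈ E; (ii) for every a ∈ E and every t ∈ (t₀ − ε, t₀ + ε), the functions s ↦ p s a and s ↦ q s a have derivatives p' t a and q' t a at t; (iii) for every t ∈ (t₀ − ε, t₀ + ε), the map a ↦ p t a · Real.log (p t a / q t a) is integrable and a.e.-strongly measurable; (iv) there is an integrable G : E → ℝ such that for almost every a and all t ∈ (t₀ − ε, t₀ + ε), |p' t a · (Real.log (p t a / q t a) + 1) − (p t a / q t a) · q' t a| ≤ G a; (v) the maps a ↦ p' t₀ a, a ↦ p' t₀ a · Real.log (p t₀ a / q t₀ a), and a ↦ (p t₀ a / q t₀ a) · q' t₀ a are integrable, with ∫ p' t₀ a da = 0. Then the function F(t) := ∫ p t a · Real.log (p t a / q t a) da has derivative at t₀ equal to ∫ p' t₀ a · Real.log (p t₀ a / q t₀ a) da − ∫ (p t₀ a / q t₀ a) · q' t₀ a da. -/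

import Mathlib

open MeasureTheory Set

theorem stmt15 (n : ℕ) (t₀ ε : ℝ) (hε : 0 < ε)
    (p q p' q' : ℝ → EuclideanSpace ℝ (Fin n) → ℝ)
    (hpos : ∀ t ∈ Ioo (t₀ - ε) (t₀ + ε), ∀ a, 0 < p t a ∧ 0 < q t a)
    (hderiv : ∀ a : EuclideanSpace ℝ (Fin n), ∀ t ∈ Ioo (t₀ - ε) (t₀ + ε),
      HasDerivAt (fun s => p s a) (p' t a) t ∧ HasDerivAt (fun s => q s a) (q' t a) t)
    (hint : ∀ t ∈ Ioo (t₀ - ε) (t₀ + ε),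
      Integrable (fun a => p t a * Real.log (p t a / q t a)))
    (hdom : ∃ G : EuclideanSpace ℝ (Fin n) → ℝ, Integrable G ∧
      ∀ᵐ a ∂(volume : Measure (EuclideanSpace ℝ (Fin n))), ∀ t ∈ Ioo (t₀ - ε) (t₀ + ε),
        |p' t a * (Real.log (p t a / q t a) + 1) - (p t a / q t a) * q' t a| ≤ G a)
    (hint1 : Integrable (fun a => p' t₀ a))
    (hint2 : Integrable (fun a => p' t₀ a * Real.log (p t₀ a / q t₀ a)))
    (hint3 : Integrable (fun a => (p t₀ a / q t₀ a) * q' t₀ a))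
    (hzero : (∫ a, p' t₀ a) = 0) :
    HasDerivAt (fun t => ∫ a, p t a * Real.log (p t a / q t a))
      ((∫ a, p' t₀ a * Real.log (p t₀ a / q t₀ a)) -
        ∫ a, (p t₀ a / q t₀ a) * q' t₀ a) t₀ := by
  obtain ⟨G, hG, hGbound⟩ := hdom
  have ht₀ : t₀ ∈ Ioo (t₀ - ε) (t₀ + ε) := by constructor <;> linarith
  set F' : ℝ → EuclideanSpace ℝ (Fin n) → ℝ := fun t a =>
    p' t a * (Real.log (p t a / q t a) + 1) - (p t a / q t a) * q' t a with hF'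
  have hball : Metric.ball t₀ ε = Ioo (t₀ - ε) (t₀ + ε) := Real.ball_eq_Ioo t₀ ε
  have hF'int : Integrable (F' t₀) := by
    have : F' t₀ = fun a => (p' t₀ a * Real.log (p t₀ a / q t₀ a) + p' t₀ a)
        - (p t₀ a / q t₀ a) * q' t₀ a := by
      funext a; simp [hF']; ring
    rw [this]
    exact (hint2.add hint1).sub hint3
  have key := hasDerivAt_integral_of_dominated_loc_of_deriv_le (Metric.ball_mem_nhds t₀ hε)
    (F := fun t a => p t a * Real.log (p t a / q t a)) (F' := F') (bound := G)
    ?_ (hint t₀ ht₀) hF'int.aestronglyMeasurable ?_ hG ?_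
  · have : (∫ a, F' t₀ a) = (∫ a, p' t₀ a * Real.log (p t₀ a / q t₀ a)) -
        ∫ a, (p t₀ a / q t₀ a) * q' t₀ a := by
      calc (∫ a, F' t₀ a) = ∫ a, (p' t₀ a * Real.log (p t₀ a / q t₀ a) + p' t₀ a)
            - (p t₀ a / q t₀ a) * q' t₀ a := by
              congr 1; funext a; simp [hF']; ring
        _ = _ := by
              have hadd : Integrable (fun a : EuclideanSpace ℝ (Fin n) =>
                  p' t₀ a * Real.log (p t₀ a / q t₀ a) + p' t₀ a) := hint2.add hint1
              rw [integral_sub hadd hint3, integral_add hint2 hint1, hzero]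
              ring
    rw [this] at key
    exact key.2
  · filter_upwards [isOpen_Ioo.mem_nhds ht₀] with t ht
    exact (hint t ht).aestronglyMeasurable
  · filter_upwards [hGbound] with a ha t ht
    rw [Real.norm_eq_abs]
    exact ha t (hball ▸ ht)
  · filter_upwards with a t ht
    rw [hball] at ht
    obtain ⟨hp, hq⟩ := hderiv a t ht
    obtain ⟨hp0, hq0⟩ := hpos t ht a
    have hlog : HasDerivAt (fun s => Real.log (p s a / q s a))
        ((p' t a * q t a - p t a * q' t a) / (q t a)^2 / (p t a / q t a)) t := by
      exact ((hp.div hq hq0.ne').log (div_pos hp0 hq0).ne')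
    have := hp.mul hlog
    refine this.congr_deriv ?_
    rw [hF']
    field_simp
    ring
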